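/- Let M be a model category with a closed symmetric monoidal structure ⊗ satisfying the pushout-product axiom, and let E be a cofibrant object of M. Let f : X → Y and g : U → V be cofibrations in M such that g ⊗ id_E : U ⊗ E → V ⊗ E is a weak equivalence. Then the pushout-product f □ g is a cofibration and (f □ g) ⊗ id_E is a weak equivalence. (Consequently the pushout-product axiom holds for the class of cofibrations of M together with the class of E-equivalences, i.e. the maps h such that h ⊗ id_E is a weak equivalence, which are the weak equivalences of the Bousfield localization of M at E.) -/

import Mathlib

/-!
STATEMENT 3: Let `M` be a model category with a closed symmetric monoidal structure
satisfying the pushout-product axiom, and `E` a cofibrant object.  If `f`, `g` are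
cofibrations and `g ⊗ 𝟙_E` is a weak equivalence, then `f □ g` is a cofibration and
`(f □ g) ⊗ 𝟙_E` is a weak equivalence.  (This is the pushout-product axiom for the
Bousfield localization of `M` at `E`.)
-/

open CategoryTheory Limits MonoidalCategory

namespace FrankeStmt3

/-- A (Quillen) model structure on a category `M`. -/
structure ModelStructure (M : Type 1) [Category.{0} M] : Type 1 where
  weq : MorphismProperty M
  cof : MorphismProperty M
  fib : MorphismProperty M
  weq_id : ∀ X : M, weq (𝟙 X)
  weq_comp : ∀ {X Y Z : M} (f : X ⟶ Y) (g : Y ⟶ Z), weq f → weq g → weq (f ≫ g)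
  weq_of_pre : ∀ {X Y Z : M} (f : X ⟶ Y) (g : Y ⟶ Z), weq f → weq (f ≫ g) → weq g
  weq_of_post : ∀ {X Y Z : M} (f : X ⟶ Y) (g : Y ⟶ Z), weq g → weq (f ≫ g) → weq f
  weq_retract : ∀ {X Y X' Y' : M} (f : X ⟶ Y) (g : X' ⟶ Y') (iX : X ⟶ X') (iY : Y ⟶ Y')
    (rX : X' ⟶ X) (rY : Y' ⟶ Y), iX ≫ rX = 𝟙 X → iY ≫ rY = 𝟙 Y →
    iX ≫ g = f ≫ iY → g ≫ rY = rX ≫ f → weq g → weq f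
  cof_retract : ∀ {X Y X' Y' : M} (f : X ⟶ Y) (g : X' ⟶ Y') (iX : X ⟶ X') (iY : Y ⟶ Y')
    (rX : X' ⟶ X) (rY : Y' ⟶ Y), iX ≫ rX = 𝟙 X → iY ≫ rY = 𝟙 Y →
    iX ≫ g = f ≫ iY → g ≫ rY = rX ≫ f → cof g → cof f
  fib_retract : ∀ {X Y X' Y' : M} (f : X ⟶ Y) (g : X' ⟶ Y') (iX : X ⟶ X') (iY : Y ⟶ Y')
    (rX : X' ⟶ X) (rY : Y' ⟶ Y), iX ≫ rX = 𝟙 X → iY ≫ rY = 𝟙 Y →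
    iX ≫ g = f ≫ iY → g ≫ rY = rX ≫ f → fib g → fib f
  lifting_cof_tfib : ∀ {A B X Y : M} (i : A ⟶ B) (p : X ⟶ Y),
    cof i → fib p → weq p → HasLiftingProperty i p
  lifting_tcof_fib : ∀ {A B X Y : M} (i : A ⟶ B) (p : X ⟶ Y),
    cof i → weq i → fib p → HasLiftingProperty i p
  factor_cof_tfib : ∀ {X Y : M} (f : X ⟶ Y), ∃ (Z : M) (i : X ⟶ Z) (p : Z ⟶ Y),
    cof i ∧ fib p ∧ weq p ∧ i ≫ p = f
  factor_tcof_fib : ∀ {X Y : M} (f : X ⟶ Y), ∃ (Z : M) (i : X ⟶ Z) (p : Z ⟶ Y),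
    cof i ∧ weq i ∧ fib p ∧ i ≫ p = f

variable {M : Type 1} [Category.{0} M] [HasColimits M] [MonoidalCategory M]

/-- The pushout-product of two morphisms of `M`. -/
noncomputable def ppM {X Y U V : M} (f : X ⟶ Y) (g : U ⟶ V) :
    pushout (X ◁ g) (f ▷ U) ⟶ Y ⊗ V :=
  pushout.desc (f ▷ V) (Y ◁ g) (whisker_exchange f g)

section Aux

lemma weq_iso (MS : ModelStructure M) {X Y X' Y' : M} (f : X ⟶ Y) (g : X' ⟶ Y')
    (eX : X ≅ X') (eY : Y ≅ Y') (h : eX.hom ≫ g = f ≫ eY.hom) (hg : MS.weq g) :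
    MS.weq f :=
  MS.weq_retract f g eX.hom eY.hom eX.inv eY.inv eX.hom_inv_id eY.hom_inv_id h
    (by rw [Iso.comp_inv_eq, Category.assoc, ← h, Iso.inv_hom_id_assoc]) hg

lemma cof_iso (MS : ModelStructure M) {X Y X' Y' : M} (f : X ⟶ Y) (g : X' ⟶ Y')
    (eX : X ≅ X') (eY : Y ≅ Y') (h : eX.hom ≫ g = f ≫ eY.hom) (hg : MS.cof g) :
    MS.cof f :=
  MS.cof_retract f g eX.hom eY.hom eX.inv eY.inv eX.hom_inv_id eY.hom_inv_id h
    (by rw [Iso.comp_inv_eq, Category.assoc, ← h, Iso.inv_hom_id_assoc]) hg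

variable [MonoidalClosed M] [SymmetricCategory M]

/-- In a closed symmetric monoidal category, `- ⊗ E` is a left adjoint. -/
noncomputable def tensorRightAdj (E : M) : tensorRight E ⊣ ihom E :=
  (ihom.adjunction E).ofNatIsoLeft
    (NatIso.ofComponents (fun X => β_ E X)
      (fun {X Y} h => by simp))

noncomputable instance tensorRight_preservesColimits (E : M) :
    PreservesColimits (tensorRight E) :=
  (tensorRightAdj E).leftAdjoint_preservesColimits

/-- `U ⊗ ⊥` is initial. -/
noncomputable def tensorInitialIsInitial (U : M) : IsInitial (U ⊗ (⊥_ M)) :=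
  isColimitOfHasInitialOfPreservesColimit (tensorLeft U)

/-- If `g` is a cofibration and `E` is cofibrant, then `g ▷ E` is a cofibration. -/
lemma cof_whiskerRight (MS : ModelStructure M)
    (ppAxiom : ∀ {X Y U V : M} (f : X ⟶ Y) (g : U ⟶ V), MS.cof f → MS.cof g →
      MS.cof (ppM f g) ∧ ((MS.weq f ∨ MS.weq g) → MS.weq (ppM f g)))
    (E : M) (hE : MS.cof (initial.to E))
    {U V : M} (g : U ⟶ V) (hg : MS.cof g) : MS.cof (g ▷ E) := by
  have hU : IsInitial (U ⊗ (⊥_ M)) := tensorInitialIsInitial U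
  have hV : IsInitial (V ⊗ (⊥_ M)) := tensorInitialIsInitial V
  haveI : IsIso (g ▷ (⊥_ M)) := ⟨hV.to _, hU.hom_ext _ _, hV.hom_ext _ _⟩
  have hcof := (ppAxiom g (initial.to E) hg hE).1
  exact cof_iso MS (g ▷ E) (ppM g (initial.to E))
    (asIso (pushout.inl (U ◁ initial.to E) (g ▷ (⊥_ M)))) (Iso.refl _)
    (by simp [ppM]; exact pushout.inl_desc _ _ _) hcof

variable {X Y U V : M} (f : X ⟶ Y) (g : U ⟶ V) (E : M)

/-- The comparison isomorphism between the pushout defining `f □ (g ▷ E)` and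
the tensor with `E` of the pushout defining `f □ g`. -/
noncomputable def ppComparison :
    (pushout (X ◁ (g ▷ E)) (f ▷ (U ⊗ E))) ≅ (pushout (X ◁ g) (f ▷ U)) ⊗ E := by
  refine ?_ ≪≫ PreservesPushout.iso (tensorRight E) (X ◁ g) (f ▷ U)
  refine ⟨pushout.desc ((α_ X V E).inv ≫ pushout.inl _ _)
      ((α_ Y U E).inv ≫ pushout.inr _ _) ?_,
    pushout.desc ((α_ X V E).hom ≫ pushout.inl _ _)
      ((α_ Y U E).hom ≫ pushout.inr _ _) ?_, ?_, ?_⟩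
  · rw [associator_inv_naturality_middle_assoc, associator_inv_naturality_left_assoc]
    exact congrArg _ pushout.condition
  · simp only [Functor.flip_obj_map, curriedTensor_map_app]
    rw [associator_naturality_middle_assoc, associator_naturality_left_assoc,
      pushout.condition]
  · apply pushout.hom_ext <;> simp only [pushout.inl_desc_assoc, pushout.inr_desc_assoc, Category.assoc, pushout.inl_desc, pushout.inr_desc, Iso.inv_hom_id_assoc, Category.comp_id]
  · apply pushout.hom_ext <;> simp only [pushout.inl_desc_assoc, pushout.inr_desc_assoc, Category.assoc, pushout.inl_desc, pushout.inr_desc, Iso.hom_inv_id_assoc, Category.comp_id]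

lemma ppComparison_comm :
    (ppComparison f g E).hom ≫ ((ppM f g) ▷ E) ≫ (α_ Y V E).hom =
      ppM f (g ▷ E) := by
  apply pushout.hom_ext
  · simp only [ppComparison, ppM, Iso.trans_hom, Category.assoc,
      pushout.inl_desc_assoc]
    rw [PreservesPushout.inl_iso_hom_assoc]
    rw [Functor.flip_obj_map, curriedTensor_map_app, ← comp_whiskerRight_assoc, pushout.inl_desc]
    simp
    exact (pushout.inl_desc _ _ _).symm
  · simp only [ppComparison, ppM, Iso.trans_hom, Category.assoc,
      pushout.inr_desc_assoc]
    rw [PreservesPushout.inr_iso_hom_assoc]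
    rw [Functor.flip_obj_map, curriedTensor_map_app, ← comp_whiskerRight_assoc, pushout.inr_desc]
    simp
    exact (pushout.inr_desc _ _ _).symm

end Aux

theorem pushout_product_axiom_for_E_local_structure
    [HasLimits M] [MonoidalClosed M] [SymmetricCategory M]
    (MS : ModelStructure M)
    (ppAxiom : ∀ {X Y U V : M} (f : X ⟶ Y) (g : U ⟶ V), MS.cof f → MS.cof g →
      MS.cof (ppM f g) ∧ ((MS.weq f ∨ MS.weq g) → MS.weq (ppM f g)))
    (E : M) (hE : MS.cof (initial.to E))
    {X Y U V : M} (f : X ⟶ Y) (g : U ⟶ V)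
    (hf : MS.cof f) (hg : MS.cof g) (hgE : MS.weq (g ▷ E)) :
    MS.cof (ppM f g) ∧ MS.weq ((ppM f g) ▷ E) := by
  refine ⟨(ppAxiom f g hf hg).1, ?_⟩
  have hgEcof : MS.cof (g ▷ E) := cof_whiskerRight MS ppAxiom E hE g hg
  have hweq : MS.weq (ppM f (g ▷ E)) :=
    (ppAxiom f (g ▷ E) hf hgEcof).2 (Or.inr hgE)
  exact weq_iso MS ((ppM f g) ▷ E) (ppM f (g ▷ E))
    (ppComparison f g E).symm (α_ Y V E)
    (by rw [Iso.symm_hom, Iso.inv_comp_eq, ppComparison_comm]) hweq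

end FrankeStmt3
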